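/- For every integer N ≥ 1, the function α ↦ (1/α)·(1 − (1 − α/N)^N) is antitone (monotonically nonincreasing) on the interval (0, 1]: if 0 < α₁ ≤ α₂ ≤ 1 then (1/α₂)·(1 − (1 − α₂/N)^N) ≤ (1/α₁)·(1 − (1 − α₁/N)^N). -/
import Mathlib

lemma tcb_eq (N : ℕ) (hN : 1 ≤ N) (α : ℝ) (hα : 0 < α) :
    (1 / α) * (1 - (1 - α / N) ^ N)
      = (1 / N) * ∑ k ∈ Finset.range N, (1 - α / N) ^ k := by
  have hNpos : (0:ℝ) < N := by exact_mod_cast Nat.lt_of_lt_of_le Nat.zero_lt_one hN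
  have key : 1 - (1 - α / N) ^ N
      = (α / N) * ∑ k ∈ Finset.range N, (1 - α / N) ^ k := by
    have := geom_sum_mul (1 - α / N) N
    nlinarith [this]
  rw [key]
  field_simp

/-- for every integer `N ≥ 1`, the total-curvature performance bound
`α ↦ (1/α)(1 − (1 − α/N)^N)` is antitone on `(0, 1]`. -/
theorem totalCurvatureBound_antitone (N : ℕ) (hN : 1 ≤ N) (α₁ α₂ : ℝ)
    (h₁ : 0 < α₁) (h₁₂ : α₁ ≤ α₂) (h₂ : α₂ ≤ 1) :
    (1 / α₂) * (1 - (1 - α₂ / N) ^ N) ≤ (1 / α₁) * (1 - (1 - α₁ / N) ^ N) := by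
  have hNpos : (0:ℝ) < N := by exact_mod_cast Nat.lt_of_lt_of_le Nat.zero_lt_one hN
  have hN1 : (1:ℝ) ≤ N := by exact_mod_cast hN
  rw [tcb_eq N hN α₁ h₁, tcb_eq N hN α₂ (lt_of_lt_of_le h₁ h₁₂)]
  have hsum : ∑ k ∈ Finset.range N, (1 - α₂ / N) ^ k
      ≤ ∑ k ∈ Finset.range N, (1 - α₁ / N) ^ k := by
    apply Finset.sum_le_sum
    intro k _
    apply pow_le_pow_left₀
    · have : α₂ / N ≤ 1 := by
        rw [div_le_one hNpos]; linarith
      linarith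
    · have : α₁ / N ≤ α₂ / N := by gcongr
      linarith
  have h1N : (0:ℝ) < 1 / N := by positivity
  exact mul_le_mul_of_nonneg_left hsum h1N.le
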